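/- (Wu–Sun–Pan) For all positive integers m and n and every rational x, one has ∑_{k=0}^{m} C(m,k)·B_{n+k}(x) = (−1)^{n+m}·∑_{k=0}^{n} C(n,k)·B_{m+k}(−x). -/
import Mathlib

open Finset

open Polynomial in
private lemma bernoulli_comp_one_sub (n : ℕ) :
    (Polynomial.bernoulli n).comp (1 - X) = (-1 : ℚ[X]) ^ n * Polynomial.bernoulli n := by
  induction n with
  | zero => simp
  | succ n ih =>
    have hd : derivative ((Polynomial.bernoulli (n+1)).comp (1 - X)
        - (-1 : ℚ[X]) ^ (n+1) * Polynomial.bernoulli (n+1)) = 0 := by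
      rw [derivative_sub, derivative_comp, Polynomial.derivative_bernoulli_add_one,
        derivative_mul, Polynomial.derivative_bernoulli_add_one, mul_comp, ih]
      have hc : Polynomial.derivative ((-1 : ℚ[X]) ^ (n + 1)) = 0 := by
        rw [show ((-1 : ℚ[X]) ^ (n + 1)) = C ((-1 : ℚ) ^ (n + 1)) by rw [C_pow, C_neg, C_1]]
        exact derivative_C
      rw [hc]
      simp [pow_succ]
      ring
    have hC := Polynomial.eq_C_of_derivative_eq_zero hd
    have h0 : ((Polynomial.bernoulli (n+1)).comp (1 - X)
        - (-1 : ℚ[X]) ^ (n+1) * Polynomial.bernoulli (n+1)).eval 1 = 0 := by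
      simp [Polynomial.eval_comp, bernoulli'_eq_bernoulli, ← mul_assoc, ← pow_add,
        Even.neg_one_pow (Even.add_self (n+1))]
    rw [hC] at h0
    simp only [Polynomial.eval_C] at h0
    exact sub_eq_zero.mp (hC.trans (by rw [h0, Polynomial.C_0]))

private lemma bernoulli_reflect_eval (n : ℕ) (x : ℚ) :
    (Polynomial.bernoulli n).eval (1 - x) = (-1 : ℚ) ^ n * (Polynomial.bernoulli n).eval x := by
  have := congrArg (Polynomial.eval x) (bernoulli_comp_one_sub n)
  simpa [Polynomial.eval_comp] using this

private lemma bernoulli_addsum (n : ℕ) (y : ℚ) :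
    ∑ k ∈ Finset.range (n + 1), (n.choose k : ℚ) * (Polynomial.bernoulli k).eval y
      = (Polynomial.bernoulli n).eval (1 + y) := by
  cases n with
  | zero => simp
  | succ d =>
    have hs := congrArg (Polynomial.eval y) (Polynomial.sum_bernoulli d)
    simp only [Polynomial.eval_finset_sum, Polynomial.eval_smul, Polynomial.eval_monomial,
      smul_eq_mul] at hs
    rw [Finset.sum_range_succ, hs, Polynomial.bernoulli_eval_one_add]
    simp
    ring

private lemma bernoulli_base (n : ℕ) (x : ℚ) :
    ∑ k ∈ Finset.range (n + 1), (n.choose k : ℚ) * (Polynomial.bernoulli k).eval (-x)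
      = (-1 : ℚ) ^ n * (Polynomial.bernoulli n).eval x := by
  rw [bernoulli_addsum, show (1 : ℚ) + -x = 1 - x by ring, bernoulli_reflect_eval]

private lemma pascal_sum (m : ℕ) (f : ℕ → ℚ) :
    ∑ k ∈ Finset.range (m + 2), ((m + 1).choose k : ℚ) * f k
      = ∑ k ∈ Finset.range (m + 1), (m.choose k : ℚ) * f k
        + ∑ k ∈ Finset.range (m + 1), (m.choose k : ℚ) * f (k + 1) := by
  have key : ∑ i ∈ Finset.range (m + 1), (m.choose (i + 1) : ℚ) * f (i + 1)
      + (m.choose 0 : ℚ) * f 0 = ∑ k ∈ Finset.range (m + 1), (m.choose k : ℚ) * f k := by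
    rw [← Finset.sum_range_succ' (fun k => (m.choose k : ℚ) * f k) (m + 1),
      Finset.sum_range_succ]
    simp [Nat.choose_eq_zero_of_lt]
  rw [Finset.sum_range_succ' (fun k => ((m + 1).choose k : ℚ) * f k) (m + 1)]
  simp only [Nat.choose_succ_succ, Nat.cast_add, add_mul, Finset.sum_add_distrib,
    Nat.choose_zero_right, Nat.cast_one, one_mul]
  rw [← key]
  simp
  ring

private lemma wsp_key (m : ℕ) : ∀ (n : ℕ) (x : ℚ),
    ∑ k ∈ Finset.range (m + 1), (m.choose k : ℚ) * (Polynomial.bernoulli (n + k)).eval x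
    = (-1 : ℚ) ^ (n + m) *
        ∑ k ∈ Finset.range (n + 1), (n.choose k : ℚ) * (Polynomial.bernoulli (m + k)).eval (-x) := by
  induction m with
  | zero =>
    intro n x
    simp only [Nat.add_zero, zero_add, Nat.choose_zero_right]
    rw [Finset.sum_range_one]
    simp only [Nat.choose_self, Nat.cast_one, one_mul, Nat.add_zero]
    rw [bernoulli_base, ← mul_assoc, ← pow_add]
    rw [Even.neg_one_pow (Even.add_self n), one_mul]
  | succ m ih =>
    intro n x
    have hL := pascal_sum m (fun k => (Polynomial.bernoulli (n + k)).eval x)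
    have hL2 : ∑ k ∈ Finset.range (m + 1), (m.choose k : ℚ)
        * (Polynomial.bernoulli (n + (k + 1))).eval x
        = ∑ k ∈ Finset.range (m + 1), (m.choose k : ℚ)
        * (Polynomial.bernoulli ((n + 1) + k)).eval x :=
      Finset.sum_congr rfl fun k _ => by rw [show n + (k + 1) = (n + 1) + k by omega]
    have hR := pascal_sum n (fun k => (Polynomial.bernoulli (m + k)).eval (-x))
    have hR2 : ∑ k ∈ Finset.range (n + 1), (n.choose k : ℚ)
        * (Polynomial.bernoulli (m + (k + 1))).eval (-x)
        = ∑ k ∈ Finset.range (n + 1), (n.choose k : ℚ)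
        * (Polynomial.bernoulli ((m + 1) + k)).eval (-x) :=
      Finset.sum_congr rfl fun k _ => by rw [show m + (k + 1) = (m + 1) + k by omega]
    rw [show m + 1 + 1 = m + 2 by rfl, hL, hL2, ih n x, ih (n + 1) x, hR, hR2]
    rw [show n + 1 + m = (n + m) + 1 by omega, show n + (m + 1) = (n + m) + 1 by omega,
      pow_succ]
    ring

theorem wu_sun_pan (m n : ℕ) (hm : 0 < m) (hn : 0 < n) (x : ℚ) :
    ∑ k ∈ Finset.range (m + 1), (m.choose k : ℚ) * (Polynomial.bernoulli (n + k)).eval x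
    = (-1 : ℚ) ^ (n + m) *
        ∑ k ∈ Finset.range (n + 1), (n.choose k : ℚ) * (Polynomial.bernoulli (m + k)).eval (-x) := by
  exact wsp_key m n x
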